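/- Let X be a finite closure space, x ∈ X and M ∈ 𝓜(x). Then M = { y ∈ X | ∃ N ∈ 𝓜(y), N ⊆ M }. (In the language of the topological resolution: π(U_{xM}) = M, where U_{xM} is the minimal open neighborhood of (x,M) in Top X and π the natural projection.) -/

import Mathlib

/-- The set of neighborhoods of a point `x` in a closure space with closure operator `c`:
`U` is a neighborhood of `x` if `x ∉ c (X \ U)`. -/
def nbhd {X : Type*} (c : Set X → Set X) (x : X) : Set (Set X) := {U | x ∉ c Uᶜ}

/-- The set `𝓜(x)` of minimal neighborhoods of `x` (minimal elements of `nbhd c x`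
under inclusion). -/
def minNbhd {X : Type*} (c : Set X → Set X) (x : X) : Set (Set X) :=
  {M | M ∈ nbhd c x ∧ ∀ U ∈ nbhd c x, U ⊆ M → U = M}

/-- A subset `U` is open in the closure space if its complement is closed. -/
def isOpenCS {X : Type*} (c : Set X → Set X) (U : Set X) : Prop := c Uᶜ = Uᶜ

/-- `A` converges to `x` if `A` is contained in some minimal neighborhood of `x`. -/
def conv {X : Type*} (c : Set X → Set X) (A : Set X) (x : X) : Prop :=
  ∃ M ∈ minNbhd c x, A ⊆ M

/-- A minimal neighborhood `M` of `x` equals the set of points having a minimal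
neighborhood contained in `M` (i.e. `π(U_{xM}) = M`). -/
theorem stmt_12 {X : Type*} [Fintype X] (c : Set X → Set X)
    (hc1 : ∀ A : Set X, A ⊆ c A)
    (hc2 : ∀ A B : Set X, A ⊆ B → c A ⊆ c B)
    (hc3 : ∀ A : Set X, c (c A) = c A)
    (x : X) (M : Set X) (hM : M ∈ minNbhd c x) :
    M = {y : X | ∃ N ∈ minNbhd c y, N ⊆ M} := by
  obtain ⟨hMn, hMmin⟩ := hM
  have hopen : c Mᶜ = Mᶜ := by
    have hU : (c Mᶜ)ᶜ ∈ nbhd c x := by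
      simp only [nbhd, Set.mem_setOf_eq, compl_compl]
      rw [hc3]; exact hMn
    have hsub : (c Mᶜ)ᶜ ⊆ M := by
      intro z hz
      by_contra h
      exact hz (hc1 Mᶜ h)
    have := hMmin _ hU hsub
    rw [← this, compl_compl]; exact hc3 _
  ext y
  constructor
  · intro hy
    have hMy : M ∈ nbhd c y := by
      simp only [nbhd, Set.mem_setOf_eq, hopen]
      exact fun h => h hy
    have hfin : ({U | U ∈ nbhd c y ∧ U ⊆ M} : Set (Set X)).Finite := Set.toFinite _
    obtain ⟨N, hN, hNmin⟩ := Set.Finite.exists_minimalFor id _ hfin ⟨M, hMy, subset_rfl⟩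
    refine ⟨N, ⟨hN.1, fun U hU hUN => ?_⟩, hN.2⟩
    exact le_antisymm hUN (hNmin ⟨hU, hUN.trans hN.2⟩ hUN)
  · rintro ⟨N, ⟨hNn, _⟩, hNM⟩
    apply hNM
    by_contra h
    exact hNn (hc1 Nᶜ h)
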